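/- For every policy π and all x, y ∈ ℝ^S, there exists a row-stochastic matrix P ∈ ℝ^{S×S} (nonnegative entries, each row summing to 1) such that L_π x − L_π y ≥ γ · P(x − y) componentwise. -/

import Mathlib

/-- For every policy π and all `x, y`, there exists a row-stochastic
matrix `Pm` such that `Lpi x − Lpi y ≥ γ · Pm (x − y)` componentwise. -/
theorem robust_bellman_policy_update_lower_linear_bound
    {S A : Type*} [Fintype S] [Nonempty S] [Fintype A] [Nonempty A]
    (γ : ℝ) (hγ0 : 0 < γ) (hγ1 : γ < 1)
    (r : S → A → S → ℝ)
    (P : S → Set (A → S → ℝ))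
    (hPne : ∀ s, (P s).Nonempty)
    (hPcompact : ∀ s, IsCompact (P s))
    (hPsub : ∀ s, ∀ p ∈ P s, ∀ a, p a ∈ stdSimplex ℝ S)
    (π : S → A → ℝ) (hπ : ∀ s, π s ∈ stdSimplex ℝ A)
    (Lpi : (S → ℝ) → (S → ℝ))
    (hLpi : ∀ v s, Lpi v s =
      sInf ((fun p : A → S → ℝ =>
        ∑ a, π s a * ∑ s', p a s' * (r s a s' + γ * v s')) '' P s)) :
    ∀ x y : S → ℝ, ∃ Pm : S → S → ℝ,
      (∀ s s', 0 ≤ Pm s s') ∧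
      (∀ s, ∑ s', Pm s s' = 1) ∧
      (∀ s, γ * ∑ s', Pm s s' * (x s' - y s') ≤ Lpi x s - Lpi y s) := by
  intro x y
  have key : ∀ s : S, ∃ p ∈ P s,
      (∀ s', 0 ≤ ∑ a, π s a * p a s') ∧
      (∑ s', ∑ a, π s a * p a s' = 1) ∧
      γ * ∑ s', (∑ a, π s a * p a s') * (x s' - y s') ≤ Lpi x s - Lpi y s := by
    intro s
    set f : (A → S → ℝ) → ℝ :=
      fun p => ∑ a, π s a * ∑ s', p a s' * (r s a s' + γ * x s') with hf
    set g : (A → S → ℝ) → ℝ :=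
      fun p => ∑ a, π s a * ∑ s', p a s' * (r s a s' + γ * y s') with hg
    have hfc : Continuous f :=
      continuous_finset_sum _ fun a _ => continuous_const.mul
        (continuous_finset_sum _ fun s' _ =>
          (continuous_apply_apply a s').mul continuous_const)
    have hgc : Continuous g :=
      continuous_finset_sum _ fun a _ => continuous_const.mul
        (continuous_finset_sum _ fun s' _ =>
          (continuous_apply_apply a s').mul continuous_const)
    obtain ⟨p, hpP, hmin⟩ := (hPcompact s).exists_isMinOn (hPne s) hfc.continuousOn
    refine ⟨p, hpP, ?_, ?_, ?_⟩
    · intro s'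
      exact Finset.sum_nonneg fun a _ =>
        mul_nonneg ((hπ s).1 a) ((hPsub s p hpP a).1 s')
    · rw [Finset.sum_comm]
      have : ∀ a : A, ∑ s', π s a * p a s' = π s a := by
        intro a
        rw [← Finset.mul_sum, (hPsub s p hpP a).2, mul_one]
      simp only [this]
      exact (hπ s).2
    · have hLx : Lpi x s = f p := by
        rw [hLpi]
        exact IsLeast.csInf_eq ⟨Set.mem_image_of_mem f hpP,
          by rintro _ ⟨q, hq, rfl⟩; exact hmin hq⟩
      have hLy : Lpi y s ≤ g p := by
        rw [hLpi]
        exact csInf_le ((hPcompact s).image hgc).bddBelow (Set.mem_image_of_mem g hpP)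
      have hkey : f p - g p = γ * ∑ s', (∑ a, π s a * p a s') * (x s' - y s') := by
        have h1 : ∀ a, π s a * ∑ s', p a s' * (r s a s' + γ * x s')
            - π s a * ∑ s', p a s' * (r s a s' + γ * y s')
            = ∑ s', γ * (π s a * p a s' * (x s' - y s')) := by
          intro a
          rw [← mul_sub, ← Finset.sum_sub_distrib, Finset.mul_sum]
          exact Finset.sum_congr rfl fun s' _ => by ring
        rw [hf, hg, ← Finset.sum_sub_distrib]
        simp only [h1]
        rw [Finset.sum_comm, Finset.mul_sum]
        refine Finset.sum_congr rfl fun s' _ => ?_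
        rw [Finset.sum_mul, Finset.mul_sum]
      calc γ * ∑ s', (∑ a, π s a * p a s') * (x s' - y s') = f p - g p := hkey.symm
        _ ≤ Lpi x s - Lpi y s := by rw [hLx]; linarith
  choose p hpP h1 h2 h3 using key
  exact ⟨fun s s' => ∑ a, π s a * p s a s', h1, h2, h3⟩
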